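/- Let φ be a co-closed G2-structure on a 7-manifold M, so that its full torsion tensor T is symmetric. Then the scalar curvature of the induced metric satisfies R = (Tr T)² − |T|². -/
import Mathlib


open scoped BigOperators

/-- Kronecker delta on `Fin 7` (the standard Euclidean metric `g`). -/
noncomputable def kdelta (i j : Fin 7) : ℝ := if i = j then 1 else 0

/-- Components of the basic 3-form `e^i ∧ e^j ∧ e^k` (a determinant of deltas). -/
noncomputable def E3 (i j k a b c : Fin 7) : ℝ :=
  Matrix.det (Matrix.of fun p q : Fin 3 => kdelta (![i, j, k] p) (![a, b, c] q))

/-- The standard `G₂` 3-form `φ = e^{123} + e^{145} + e^{167} + e^{246} - e^{257} - e^{347} - e^{356}`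
on `ℝ⁷` (indices written 0-based), as a totally antisymmetric 3-tensor. -/
noncomputable def stdPhi (a b c : Fin 7) : ℝ :=
  E3 0 1 2 a b c + E3 0 3 4 a b c + E3 0 5 6 a b c + E3 1 3 5 a b c
    - E3 1 4 6 a b c - E3 2 3 6 a b c - E3 2 4 5 a b c

/-- Components of the basic 4-form `e^i ∧ e^j ∧ e^k ∧ e^l`. -/
noncomputable def E4 (i j k l a b c d : Fin 7) : ℝ :=
  Matrix.det (Matrix.of fun p q : Fin 4 => kdelta (![i, j, k, l] p) (![a, b, c, d] q))

/-- The 4-form `ψ = *φ = e^{4567} + e^{2367} + e^{2345} + e^{1357} - e^{1346} - e^{1256} - e^{1247}`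
on `ℝ⁷` (indices written 0-based), as a totally antisymmetric 4-tensor. -/
noncomputable def stdPsi (a b c d : Fin 7) : ℝ :=
  E4 3 4 5 6 a b c d + E4 1 2 5 6 a b c d + E4 1 2 3 4 a b c d + E4 0 2 4 6 a b c d
    - E4 0 2 3 5 a b c d - E4 0 1 4 5 a b c d - E4 0 1 3 6 a b c d

lemma E3_swap13 (i j k a b c : Fin 7) : E3 i j k c b a = -E3 i j k a b c := by
  unfold E3
  have h : (Matrix.of fun p q : Fin 3 => kdelta (![i, j, k] p) (![c, b, a] q))
      = (Matrix.of fun p q : Fin 3 => kdelta (![i, j, k] p) (![a, b, c] q)).submatrix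
          id (Equiv.swap (0 : Fin 3) 2) := by
    ext p q
    fin_cases q <;> simp [Matrix.submatrix, Equiv.swap_apply_def]
  rw [h, Matrix.det_permute']
  simp

lemma E4_swap12 (i j k l a b c d : Fin 7) : E4 i j k l b a c d = -E4 i j k l a b c d := by
  unfold E4
  have h : (Matrix.of fun p q : Fin 4 => kdelta (![i, j, k, l] p) (![b, a, c, d] q))
      = (Matrix.of fun p q : Fin 4 => kdelta (![i, j, k, l] p) (![a, b, c, d] q)).submatrix
          id (Equiv.swap (0 : Fin 4) 1) := by
    ext p q
    fin_cases q <;> simp [Matrix.submatrix, Equiv.swap_apply_def]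
  rw [h, Matrix.det_permute']
  simp

lemma stdPhi_swap13 (a b c : Fin 7) : stdPhi c b a = -stdPhi a b c := by
  unfold stdPhi
  rw [E3_swap13 0 1 2 a b c, E3_swap13 0 3 4 a b c, E3_swap13 0 5 6 a b c,
    E3_swap13 1 3 5 a b c, E3_swap13 1 4 6 a b c, E3_swap13 2 3 6 a b c, E3_swap13 2 4 5 a b c]
  ring

lemma stdPsi_swap12 (a b c d : Fin 7) : stdPsi b a c d = -stdPsi a b c d := by
  unfold stdPsi
  rw [E4_swap12 3 4 5 6 a b c d, E4_swap12 1 2 5 6 a b c d, E4_swap12 1 2 3 4 a b c d,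
    E4_swap12 0 2 4 6 a b c d, E4_swap12 0 2 3 5 a b c d, E4_swap12 0 1 4 5 a b c d,
    E4_swap12 0 1 3 6 a b c d]
  ring

lemma sum3_swap13 (g : Fin 7 → Fin 7 → Fin 7 → ℝ) :
    ∑ a : Fin 7, ∑ m : Fin 7, ∑ n : Fin 7, g a m n
      = ∑ a : Fin 7, ∑ m : Fin 7, ∑ n : Fin 7, g n m a := by
  calc ∑ a : Fin 7, ∑ m : Fin 7, ∑ n : Fin 7, g a m n
      = ∑ a : Fin 7, ∑ n : Fin 7, ∑ m : Fin 7, g a m n :=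
        Finset.sum_congr rfl (fun a _ => Finset.sum_comm)
    _ = ∑ n : Fin 7, ∑ a : Fin 7, ∑ m : Fin 7, g a m n := Finset.sum_comm
    _ = ∑ n : Fin 7, ∑ m : Fin 7, ∑ a : Fin 7, g a m n :=
        Finset.sum_congr rfl (fun n _ => Finset.sum_comm)


/-- Scalar curvature of a co-closed `G₂`-structure: if the full torsion tensor `T` is symmetric
(the co-closed case) — so that its covariant derivative `DT = ∇T` is symmetric in its last two
indices — then the general identity
`R = 2 Tr(curl T) - ψ(T,T) - Tr(T²) + (Tr T)²` reduces to `R = (Tr T)² - |T|²`,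
where `(curl T)_{ab} = (∇_m T_{na}) φ_b{}^{mn}` and `ψ(T,T) = ψ_{abcd} T^{ab} T^{cd}`. -/
theorem scalar_curvature_coclosed (T : Fin 7 → Fin 7 → ℝ)
    (DT : Fin 7 → Fin 7 → Fin 7 → ℝ) (R : ℝ)
    (hTsymm : ∀ a b : Fin 7, T a b = T b a)
    (hDTsymm : ∀ m n a : Fin 7, DT m n a = DT m a n)
    (hR : R = 2 * (∑ a : Fin 7, ∑ m : Fin 7, ∑ n : Fin 7, DT m n a * stdPhi a m n)
        - (∑ a : Fin 7, ∑ b : Fin 7, ∑ c : Fin 7, ∑ d : Fin 7, stdPsi a b c d * T a b * T c d)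
        - (∑ a : Fin 7, ∑ k : Fin 7, T a k * T k a)
        + (∑ a : Fin 7, T a a) ^ 2) :
    R = (∑ a : Fin 7, T a a) ^ 2 - ∑ a : Fin 7, ∑ b : Fin 7, T a b * T a b := by
  have hcurl : (∑ a : Fin 7, ∑ m : Fin 7, ∑ n : Fin 7, DT m n a * stdPhi a m n) = 0 := by
    have h := sum3_swap13 (fun a m n => DT m n a * stdPhi a m n)
    have h2 : ∑ a : Fin 7, ∑ m : Fin 7, ∑ n : Fin 7, DT m a n * stdPhi n m a
        = -∑ a : Fin 7, ∑ m : Fin 7, ∑ n : Fin 7, DT m n a * stdPhi a m n := by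
      rw [← Finset.sum_neg_distrib]
      refine Finset.sum_congr rfl fun a _ => ?_
      rw [← Finset.sum_neg_distrib]
      refine Finset.sum_congr rfl fun m _ => ?_
      rw [← Finset.sum_neg_distrib]
      refine Finset.sum_congr rfl fun n _ => ?_
      rw [stdPhi_swap13, ← hDTsymm]
      ring
    rw [h2] at h
    linarith
  have hpsi : (∑ a : Fin 7, ∑ b : Fin 7, ∑ c : Fin 7, ∑ d : Fin 7,
      stdPsi a b c d * T a b * T c d) = 0 := by
    have h : (∑ a : Fin 7, ∑ b : Fin 7, ∑ c : Fin 7, ∑ d : Fin 7,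
        stdPsi a b c d * T a b * T c d)
        = ∑ a : Fin 7, ∑ b : Fin 7, ∑ c : Fin 7, ∑ d : Fin 7,
            stdPsi b a c d * T b a * T c d := Finset.sum_comm
    have h2 : (∑ a : Fin 7, ∑ b : Fin 7, ∑ c : Fin 7, ∑ d : Fin 7,
        stdPsi b a c d * T b a * T c d)
        = -∑ a : Fin 7, ∑ b : Fin 7, ∑ c : Fin 7, ∑ d : Fin 7,
            stdPsi a b c d * T a b * T c d := by
      rw [← Finset.sum_neg_distrib]
      refine Finset.sum_congr rfl fun a _ => ?_
      rw [← Finset.sum_neg_distrib]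
      refine Finset.sum_congr rfl fun b _ => ?_
      rw [← Finset.sum_neg_distrib]
      refine Finset.sum_congr rfl fun c _ => ?_
      rw [← Finset.sum_neg_distrib]
      refine Finset.sum_congr rfl fun d _ => ?_
      rw [stdPsi_swap12, hTsymm b a]
      ring
    rw [h2] at h
    linarith
  have htr : (∑ a : Fin 7, ∑ k : Fin 7, T a k * T k a)
      = ∑ a : Fin 7, ∑ b : Fin 7, T a b * T a b := by
    refine Finset.sum_congr rfl fun a _ => Finset.sum_congr rfl fun k _ => ?_
    rw [hTsymm k a]
  rw [hR, hcurl, hpsi, htr]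
  ring
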